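/- Suppose M : ℝ² → ℝ² → ℝ² is a commutative operation such that for every a ∈ ℝ², the maps x ↦ a + x and x ↦ a - x commute with M (i.e., f (M x y) = M (f x) (f y)). Then M x y = (x + y)/2 for all x, y. -/
import Mathlib

theorem stmt_1 (M : ℝ × ℝ → ℝ × ℝ → ℝ × ℝ)
    (hcomm : ∀ x y, M x y = M y x)
    (hplus : ∀ a x y, a + M x y = M (a + x) (a + y))
    (hminus : ∀ a x y, a - M x y = M (a - x) (a - y)) :
    ∀ x y, M x y = ((2 : ℝ)⁻¹) • (x + y) := by
  have hodd : ∀ d, M (-d) 0 = -(M 0 d) := by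
    intro d
    have := hminus 0 0 d
    simpa [hcomm 0 (-d)] using this.symm
  have key : ∀ d : ℝ × ℝ, M 0 d = (2 : ℝ)⁻¹ • d := by
    intro d
    have h1 := hplus d (-d) 0
    rw [add_neg_cancel, add_zero, hodd] at h1
    -- h1 : d + -(M 0 d) = M 0 d
    have h2 : M 0 d + M 0 d = d := by
      have := h1
      linear_combination (norm := module) -this
    have := congrArg (fun z => (2 : ℝ)⁻¹ • z) h2
    simpa [smul_add, ← two_smul ℝ, smul_smul] using this
  intro x y
  have h3 := hplus x 0 (y - x)
  rw [add_zero, add_sub_cancel] at h3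
  rw [← h3, key]
  module
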